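/- Let X be a real Banach space, L : X →L[ℝ] X a bounded linear operator, and τ ≥ 0. Then τ · φ₁(τ·L) = ∫_{s∈[0,τ]} exp((τ−s)·L) ds, where the integral is a Bochner integral in operator norm. -/

import Mathlib

open MeasureTheory intervalIntegral
open scoped Nat

set_option synthInstance.maxHeartbeats 1000000
set_option maxHeartbeats 1000000

/-- The operator `φ_ℓ(T) = ∑_{k=0}^∞ T^k / (ℓ+k)!` (for `ℓ = 0` this is `exp T`). -/
noncomputable def phi {X : Type*} [NormedAddCommGroup X] [NormedSpace ℝ X] [CompleteSpace X]
    (ℓ : ℕ) (T : X →L[ℝ] X) : X →L[ℝ] X :=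
  ∑' k : ℕ, (((ℓ + k)! : ℝ)⁻¹) • T ^ k

lemma norm_op_pow_le {X : Type*} [NormedAddCommGroup X] [NormedSpace ℝ X]
    (A : X →L[ℝ] X) (k : ℕ) : ‖A ^ k‖ ≤ ‖A‖ ^ k := by
  rcases Nat.eq_zero_or_pos k with rfl | hk
  · simp only [pow_zero]; exact ContinuousLinearMap.norm_id_le
  · exact norm_pow_le' A hk

theorem stmt3 {X : Type*} [NormedAddCommGroup X] [NormedSpace ℝ X] [CompleteSpace X]
    (L : X →L[ℝ] X) (τ : ℝ) (hτ : 0 ≤ τ) :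
    τ • phi 1 (τ • L) = ∫ s in (0:ℝ)..τ, NormedSpace.exp ((τ - s) • L) := by
  have h1 : (∫ s in (0:ℝ)..τ, NormedSpace.exp ((τ - s) • L))
      = ∫ u in (0:ℝ)..τ, NormedSpace.exp (u • L) := by
    simpa using intervalIntegral.integral_comp_sub_left
      (a := (0:ℝ)) (b := τ) (fun u => NormedSpace.exp (u • L)) τ
  rw [h1, intervalIntegral.integral_of_le hτ]
  have hpow : ∀ (u : ℝ) (k : ℕ), (u • L) ^ k = u ^ k • L ^ k := fun u k => smul_pow u L k
  have h2 : ∀ u : ℝ, NormedSpace.exp (u • L)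
      = ∑' k : ℕ, (((k)! : ℝ)⁻¹ * u ^ k) • L ^ k := by
    intro u
    simp only [NormedSpace.exp_eq_tsum ℝ]
    congr 1
    funext k
    rw [hpow, smul_smul]
  have hcont : ∀ k : ℕ, Continuous fun u : ℝ => (((k)! : ℝ)⁻¹ * u ^ k) • L ^ k := by
    intro k
    exact (continuous_const.mul (continuous_pow k)).smul continuous_const
  have hint : ∀ k : ℕ, Integrable (fun u : ℝ => (((k)! : ℝ)⁻¹ * u ^ k) • L ^ k)
      (volume.restrict (Set.Ioc 0 τ)) := fun k => (hcont k).integrableOn_Ioc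
  have hbound : ∀ (k : ℕ), ∀ u ∈ Set.Ioc (0:ℝ) τ,
      ‖(((k)! : ℝ)⁻¹ * u ^ k) • L ^ k‖ ≤ (τ * ‖L‖) ^ k / (k)! := by
    intro k u hu
    rw [norm_smul (α := ℝ) ((((k)! : ℝ))⁻¹ * u ^ k) (L ^ k)]
    have hb1 : ‖((k)! : ℝ)⁻¹ * u ^ k‖ ≤ τ ^ k / (k)! := by
      rw [Real.norm_eq_abs, abs_mul, abs_pow,
        abs_of_nonneg (by positivity : (0:ℝ) ≤ ((k)! : ℝ)⁻¹),
        abs_of_nonneg (le_of_lt hu.1), div_eq_inv_mul]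
      gcongr
      · exact le_of_lt hu.1
      · exact hu.2
    calc ‖((k)! : ℝ)⁻¹ * u ^ k‖ * ‖L ^ k‖
        ≤ (τ ^ k / (k)!) * ‖L‖ ^ k := by
          apply mul_le_mul hb1 (norm_op_pow_le L k) (norm_nonneg _) (by positivity)
      _ = (τ * ‖L‖) ^ k / (k)! := by rw [mul_pow]; ring
  have hsum : Summable fun k : ℕ =>
      ∫ u in Set.Ioc (0:ℝ) τ, ‖(((k)! : ℝ)⁻¹ * u ^ k) • L ^ k‖ := by
    apply Summable.of_nonneg_of_le
      (fun k => integral_nonneg fun u => norm_nonneg _) (fun k => ?_)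
      ((Real.summable_pow_div_factorial (τ * ‖L‖)).mul_left τ)
    have hμ : volume (Set.Ioc (0:ℝ) τ) < ⊤ := by
      rw [Real.volume_Ioc]; exact ENNReal.ofReal_lt_top
    have := MeasureTheory.norm_setIntegral_le_of_norm_le_const (μ := volume)
      (s := Set.Ioc (0:ℝ) τ) hμ
      (C := (τ * ‖L‖) ^ k / (k)!)
      (f := fun u => ‖(((k)! : ℝ)⁻¹ * u ^ k) • L ^ k‖)
      (fun u hu => by
        rw [Real.norm_eq_abs, abs_of_nonneg (norm_nonneg _)]
        exact hbound k u hu)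
    calc (∫ u in Set.Ioc (0:ℝ) τ, ‖(((k)! : ℝ)⁻¹ * u ^ k) • L ^ k‖)
        ≤ ‖∫ u in Set.Ioc (0:ℝ) τ, ‖(((k)! : ℝ)⁻¹ * u ^ k) • L ^ k‖‖ := le_abs_self _
      _ ≤ ((τ * ‖L‖) ^ k / (k)!) * (volume (Set.Ioc (0:ℝ) τ)).toReal := by
          rw [← measureReal_def]; exact this
      _ = τ * ((τ * ‖L‖) ^ k / (k)!) := by
          rw [Real.volume_Ioc, ENNReal.toReal_ofReal (by linarith)]
          ring
  -- swap integral and sum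
  have hswap : (∫ u in Set.Ioc (0:ℝ) τ, NormedSpace.exp (u • L))
      = ∑' k : ℕ, ∫ u in Set.Ioc (0:ℝ) τ, (((k)! : ℝ)⁻¹ * u ^ k) • L ^ k := by
    simp_rw [h2]
    exact (MeasureTheory.integral_tsum_of_summable_integral_norm hint hsum).symm
  rw [hswap]
  -- compute each integral
  have hterm : ∀ k : ℕ, (∫ u in Set.Ioc (0:ℝ) τ, (((k)! : ℝ)⁻¹ * u ^ k) • L ^ k)
      = (τ ^ (k + 1) / ((k + 1) * (k)!)) • L ^ k := by
    intro k
    rw [_root_.integral_smul_const]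
    congr 1
    rw [← intervalIntegral.integral_of_le hτ, intervalIntegral.integral_const_mul,
      integral_pow]
    push_cast
    have hk : ((k)! : ℝ) ≠ 0 := by positivity
    have hk1 : ((k : ℝ) + 1) ≠ 0 := by positivity
    rw [zero_pow (Nat.succ_ne_zero k), sub_zero]
    field_simp
  simp_rw [hterm]
  -- compute the left-hand side
  rw [phi, ← tsum_const_smul'' τ]
  congr 1
  funext k
  rw [hpow, smul_smul, smul_smul]
  congr 1
  have : ((1 + k)! : ℝ) = ((k : ℝ) + 1) * (k)! := by
    rw [add_comm 1 k]
    push_cast [Nat.factorial_succ]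
    ring
  rw [this]
  have hk : ((k)! : ℝ) ≠ 0 := by positivity
  have hk1 : ((k : ℝ) + 1) ≠ 0 := by positivity
  field_simp
  ring
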